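/- arXiv:2102.06620 — 2 statements merged into one kernel-verified Lean document; each statement's English description precedes it below -/
import Mathlib

section
/- Let N be an ℕ-valued random variable with 0 < E[N] < ∞, let T_1,T_2,… be 𝒯-valued random elements (with arbitrary joint distribution together with N), and let X_1,X_2,… be i.i.d. 𝒳-valued random elements with law ν, with the family (X_i)_{i≥1} independent of (N,(T_i)_{i≥1}). Assume ν is a Borel probability measure on 𝒳 with ν({0}) = 0 that is regularly varying with scaling sequence (a_n) and limit measure μ. Then for every bounded continuous f : 𝒯×𝒳 → [0,∞) for which there exists r > 0 with f(t,x) = 0 whenever d(0,x) < r, one has n·E[1 − exp(−Σ_{i=1}^{N} f(T_i, a_n⁻¹•X_i))] → E[Σ_{i=1}^{N} ∫_𝒳 (1 − e^{−f(T_i,x)}) μ(dx)] as n → ∞. -/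
open MeasureTheory Filter Metric Topology

lemma stmt13_telescope (e : ℕ → ℝ) : ∀ m : ℕ,
    1 - ∏ i ∈ Finset.range m, e i
      = ∑ i ∈ Finset.range m, (∏ j ∈ Finset.range i, e j) * (1 - e i) := by
  intro m
  induction m with
  | zero => simp
  | succ m ih =>
      rw [Finset.sum_range_succ, Finset.prod_range_succ, ← ih]
      ring

lemma stmt13_one_sub_prod_le (e : ℕ → ℝ) (h0 : ∀ i, 0 ≤ e i) (h1 : ∀ i, e i ≤ 1) : ∀ m : ℕ,
    1 - ∏ i ∈ Finset.range m, e i ≤ ∑ i ∈ Finset.range m, (1 - e i) := by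
  intro m
  induction m with
  | zero => simp
  | succ m ih =>
      rw [Finset.sum_range_succ, Finset.prod_range_succ]
      have hp0 : 0 ≤ ∏ i ∈ Finset.range m, e i := Finset.prod_nonneg fun i _ => h0 i
      have hp1 : ∏ i ∈ Finset.range m, e i ≤ 1 :=
        Finset.prod_le_one (fun i _ => h0 i) (fun i _ => h1 i)
      nlinarith [h0 m, h1 m]

lemma stmt13_integrable_of_bdd {Ω : Type*} [MeasurableSpace Ω] {P : Measure Ω}
    [IsFiniteMeasure P] {F : Ω → ℝ} (hm : AEStronglyMeasurable F P) (C : ℝ)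
    (hb : ∀ ω, |F ω| ≤ C) : Integrable F P :=
  (integrable_const C).mono' hm (Filter.Eventually.of_forall (fun ω => by
    simpa using hb ω))

section Indep
variable {T : Type*} [MeasurableSpace T] {X : Type*} [MeasurableSpace X]
  {Ω : Type*} [MeasurableSpace Ω] {P : Measure Ω} [IsProbabilityMeasure P]
  {N : Ω → ℕ} {Tt : ℕ → Ω → T} {Xx : ℕ → Ω → X}

lemma stmt13_indep_single
    (hIndep : ∀ (j n : ℕ) (A : ℕ → Set T) (B : ℕ → Set X),
      (∀ i, MeasurableSet (A i)) → (∀ i, MeasurableSet (B i)) →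
      P (({ω | N ω = j} ∩ ⋂ i ∈ Finset.range n, {ω | Tt i ω ∈ A i}) ∩
          ⋂ i ∈ Finset.range n, {ω | Xx i ω ∈ B i})
        = P ({ω | N ω = j} ∩ ⋂ i ∈ Finset.range n, {ω | Tt i ω ∈ A i}) *
          ∏ i ∈ Finset.range n, P {ω | Xx i ω ∈ B i})
    (j i : ℕ) {A : Set T} {B : Set X} (hA : MeasurableSet A) (hB : MeasurableSet B) :
    P (({ω | N ω = j} ∩ Tt i ⁻¹' A) ∩ Xx i ⁻¹' B)
      = P ({ω | N ω = j} ∩ Tt i ⁻¹' A) * P (Xx i ⁻¹' B) := by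
  have h := hIndep j (i + 1) (fun k => if k = i then A else Set.univ)
      (fun k => if k = i then B else Set.univ)
      (fun k => by by_cases h : k = i <;> simp [h, hA]) (fun k => by by_cases h : k = i <;> simp [h, hB])
  have hT : (⋂ k ∈ Finset.range (i + 1), {ω | Tt k ω ∈ if k = i then A else Set.univ})
      = Tt i ⁻¹' A := by
    ext ω
    simp only [Set.mem_iInter, Set.mem_setOf_eq, Set.mem_preimage]
    constructor
    · intro hh
      have := hh i (by simp [Finset.mem_range])
      simpa using this
    · intro hh k hk
      by_cases hki : k = i <;> simp [hki, hh]
  have hX : (⋂ k ∈ Finset.range (i + 1), {ω | Xx k ω ∈ if k = i then B else Set.univ})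
      = Xx i ⁻¹' B := by
    ext ω
    simp only [Set.mem_iInter, Set.mem_setOf_eq, Set.mem_preimage]
    constructor
    · intro hh
      have := hh i (by simp [Finset.mem_range])
      simpa using this
    · intro hh k hk
      by_cases hki : k = i <;> simp [hki, hh]
  have hP : (∏ k ∈ Finset.range (i + 1), P {ω | Xx k ω ∈ if k = i then B else Set.univ})
      = P (Xx i ⁻¹' B) := by
    rw [Finset.prod_eq_single i]
    · simp [Set.preimage]
    · intro k _ hki
      simp [hki]
    · intro hi
      exact absurd (Finset.mem_range.2 (Nat.lt_succ_self i)) hi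
  rw [hT, hX, hP] at h
  exact h

lemma stmt13_indepT (hNmeas : Measurable N) (hTmeas : ∀ i, Measurable (Tt i))
    (hXmeas : ∀ i, Measurable (Xx i))
    (hIndep : ∀ (j n : ℕ) (A : ℕ → Set T) (B : ℕ → Set X),
      (∀ i, MeasurableSet (A i)) → (∀ i, MeasurableSet (B i)) →
      P (({ω | N ω = j} ∩ ⋂ i ∈ Finset.range n, {ω | Tt i ω ∈ A i}) ∩
          ⋂ i ∈ Finset.range n, {ω | Xx i ω ∈ B i})
        = P ({ω | N ω = j} ∩ ⋂ i ∈ Finset.range n, {ω | Tt i ω ∈ A i}) *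
          ∏ i ∈ Finset.range n, P {ω | Xx i ω ∈ B i})
    (s : Set ℕ) (i : ℕ) {A : Set T} {B : Set X} (hA : MeasurableSet A)
    (hB : MeasurableSet B) :
    P ((N ⁻¹' s ∩ Tt i ⁻¹' A) ∩ Xx i ⁻¹' B)
      = P (N ⁻¹' s ∩ Tt i ⁻¹' A) * P (Xx i ⁻¹' B) := by
  have hU : ∀ E : Set Ω, N ⁻¹' s ∩ E = ⋃ j : s, ({ω | N ω = (j : ℕ)} ∩ E) := by
    intro E
    ext ω
    simp only [Set.mem_inter_iff, Set.mem_preimage, Set.mem_iUnion, Set.mem_setOf_eq]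
    constructor
    · rintro ⟨hs, hE⟩
      exact ⟨⟨N ω, hs⟩, rfl, hE⟩
    · rintro ⟨⟨j, hj⟩, hjω, hE⟩
      simp only at hjω
      exact ⟨hjω ▸ hj, hE⟩
  have hmeas : ∀ (j : ℕ) (E : Set Ω), MeasurableSet E →
      MeasurableSet ({ω | N ω = j} ∩ E) := by
    intro j E hE
    exact (hNmeas (measurableSet_singleton j)).inter hE
  have hdisj : ∀ E : Set Ω, Pairwise (Function.onFun Disjoint
      (fun j : s => {ω | N ω = (j : ℕ)} ∩ E)) := by
    intro E j k hjk
    refine Set.disjoint_left.2 ?_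
    rintro ω ⟨hj, -⟩ ⟨hk, -⟩
    simp only [Set.mem_setOf_eq] at hj hk
    exact hjk (Subtype.coe_injective (hj.symm.trans hk))
  have hmeasE1 : MeasurableSet (Tt i ⁻¹' A ∩ Xx i ⁻¹' B) :=
    ((hTmeas i) hA).inter ((hXmeas i) hB)
  have hmeasE2 : MeasurableSet (Tt i ⁻¹' A) := (hTmeas i) hA
  have key : ∀ j : ℕ, P (({ω | N ω = j} ∩ Tt i ⁻¹' A) ∩ Xx i ⁻¹' B)
      = P ({ω | N ω = j} ∩ Tt i ⁻¹' A) * P (Xx i ⁻¹' B) :=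
    fun j => stmt13_indep_single hIndep j i hA hB
  calc P ((N ⁻¹' s ∩ Tt i ⁻¹' A) ∩ Xx i ⁻¹' B)
      = P (N ⁻¹' s ∩ (Tt i ⁻¹' A ∩ Xx i ⁻¹' B)) := by rw [Set.inter_assoc]
    _ = ∑' j : s, P ({ω | N ω = (j : ℕ)} ∩ (Tt i ⁻¹' A ∩ Xx i ⁻¹' B)) := by
        rw [hU, measure_iUnion (hdisj _) (fun j => hmeas _ _ hmeasE1)]
    _ = ∑' j : s, P ({ω | N ω = (j : ℕ)} ∩ Tt i ⁻¹' A) * P (Xx i ⁻¹' B) := by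
        refine tsum_congr fun j => ?_
        rw [← Set.inter_assoc]
        exact key j
    _ = (∑' j : s, P ({ω | N ω = (j : ℕ)} ∩ Tt i ⁻¹' A)) * P (Xx i ⁻¹' B) :=
        ENNReal.tsum_mul_right
    _ = P (N ⁻¹' s ∩ Tt i ⁻¹' A) * P (Xx i ⁻¹' B) := by
        rw [hU, measure_iUnion (hdisj _) (fun j => hmeas _ _ hmeasE2)]

end Indep

section Indep2
variable {T : Type*} [MeasurableSpace T] {X : Type*} [MeasurableSpace X]
  {Ω : Type*} [MeasurableSpace Ω] {P : Measure Ω} [IsProbabilityMeasure P]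
  {N : Ω → ℕ} {Tt : ℕ → Ω → T} {Xx : ℕ → Ω → X}

lemma stmt13_partition (hNmeas : Measurable N) {E : Set Ω} (hE : MeasurableSet E) :
    P E = ∑' j : ℕ, P ({ω | N ω = j} ∩ E) := by
  have hU : E = ⋃ j : ℕ, ({ω | N ω = j} ∩ E) := by
    ext ω
    simp only [Set.mem_iUnion, Set.mem_inter_iff, Set.mem_setOf_eq]
    exact ⟨fun h => ⟨N ω, rfl, h⟩, fun ⟨j, _, h⟩ => h⟩
  have hdisj : Pairwise (Function.onFun Disjoint (fun j : ℕ => {ω | N ω = j} ∩ E)) := by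
    intro j k hjk
    refine Set.disjoint_left.2 ?_
    rintro ω ⟨hj, -⟩ ⟨hk, -⟩
    simp only [Set.mem_setOf_eq] at hj hk
    exact hjk (hj.symm.trans hk)
  conv_lhs => rw [hU]
  exact measure_iUnion hdisj fun j => (hNmeas (measurableSet_singleton j)).inter hE

lemma stmt13_indepXX (hNmeas : Measurable N) (hXmeas : ∀ i, Measurable (Xx i))
    (hIndep : ∀ (j n : ℕ) (A : ℕ → Set T) (B : ℕ → Set X),
      (∀ i, MeasurableSet (A i)) → (∀ i, MeasurableSet (B i)) →
      P (({ω | N ω = j} ∩ ⋂ i ∈ Finset.range n, {ω | Tt i ω ∈ A i}) ∩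
          ⋂ i ∈ Finset.range n, {ω | Xx i ω ∈ B i})
        = P ({ω | N ω = j} ∩ ⋂ i ∈ Finset.range n, {ω | Tt i ω ∈ A i}) *
          ∏ i ∈ Finset.range n, P {ω | Xx i ω ∈ B i})
    {i j : ℕ} (hij : i ≠ j) : ProbabilityTheory.IndepFun (Xx i) (Xx j) P := by
  rw [ProbabilityTheory.indepFun_iff_measure_inter_preimage_eq_mul]
  intro B B' hB hB'
  set n := max i j + 1 with hn
  have hin : i ∈ Finset.range n := Finset.mem_range.2 (Nat.lt_succ_of_le (le_max_left i j))
  have hjn : j ∈ Finset.range n := Finset.mem_range.2 (Nat.lt_succ_of_le (le_max_right i j))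
  set Bk : ℕ → Set X := fun k => if k = i then B else if k = j then B' else Set.univ with hBk
  have hBkm : ∀ k, MeasurableSet (Bk k) := by
    intro k
    by_cases h1 : k = i
    · simp [hBk, h1, hij, hB]
    · by_cases h2 : k = j <;> simp [hBk, h1, h2, hB', Ne.symm hij]
  have hXset : (⋂ k ∈ Finset.range n, {ω | Xx k ω ∈ Bk k})
      = Xx i ⁻¹' B ∩ Xx j ⁻¹' B' := by
    ext ω
    simp only [Set.mem_iInter, Set.mem_setOf_eq, Set.mem_inter_iff, Set.mem_preimage]
    constructor
    · intro hh
      have h1 := hh i hin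
      have h2 := hh j hjn
      simp only [hBk, if_pos rfl] at h1
      have h2' : Xx j ω ∈ B' := by simpa [hBk, Ne.symm hij] using h2
      exact ⟨h1, h2'⟩
    · rintro ⟨h1, h2⟩ k hk
      by_cases e1 : k = i
      · subst e1; simpa [hBk] using h1
      · by_cases e2 : k = j
        · subst e2; simpa [hBk, Ne.symm hij] using h2
        · simp [hBk, e1, e2]
  have hprod : (∏ k ∈ Finset.range n, P {ω | Xx k ω ∈ Bk k})
      = P (Xx i ⁻¹' B) * P (Xx j ⁻¹' B') := by
    have hsub : ({i, j} : Finset ℕ) ⊆ Finset.range n := by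
      intro k hk
      rcases Finset.mem_insert.1 hk with h | h
      · exact h ▸ hin
      · exact (Finset.mem_singleton.1 h) ▸ hjn
    rw [← Finset.prod_subset hsub]
    · rw [Finset.prod_pair hij]
      have e1 : {ω | Xx i ω ∈ Bk i} = Xx i ⁻¹' B := by simp [hBk, Set.preimage]
      have e2 : {ω | Xx j ω ∈ Bk j} = Xx j ⁻¹' B' := by
        simp only [hBk, if_neg (Ne.symm hij), if_pos rfl]; rfl
      rw [e1, e2]
    · intro k _ hk
      have e1 : k ≠ i := fun h => hk (by simp [h])
      have e2 : k ≠ j := fun h => hk (by simp [h])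
      simp [hBk, e1, e2]
  have hTuniv : (⋂ k ∈ Finset.range n, {ω | Tt k ω ∈ (fun _ => (Set.univ : Set T)) k})
      = Set.univ := by simp
  have key : ∀ j' : ℕ, P ({ω | N ω = j'} ∩ (Xx i ⁻¹' B ∩ Xx j ⁻¹' B'))
      = P {ω | N ω = j'} * (P (Xx i ⁻¹' B) * P (Xx j ⁻¹' B')) := by
    intro j'
    have h := hIndep j' n (fun _ => Set.univ) Bk (fun _ => MeasurableSet.univ) hBkm
    rw [hTuniv, hXset, hprod, Set.inter_univ] at h
    exact h
  have hE : MeasurableSet (Xx i ⁻¹' B ∩ Xx j ⁻¹' B') :=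
    ((hXmeas i) hB).inter ((hXmeas j) hB')
  rw [stmt13_partition hNmeas hE]
  calc (∑' j' : ℕ, P ({ω | N ω = j'} ∩ (Xx i ⁻¹' B ∩ Xx j ⁻¹' B')))
      = ∑' j' : ℕ, P {ω | N ω = j'} * (P (Xx i ⁻¹' B) * P (Xx j ⁻¹' B')) :=
        tsum_congr key
    _ = (∑' j' : ℕ, P {ω | N ω = j'}) * (P (Xx i ⁻¹' B) * P (Xx j ⁻¹' B')) :=
        ENNReal.tsum_mul_right
    _ = P (Xx i ⁻¹' B) * P (Xx j ⁻¹' B') := by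
        have : (∑' j' : ℕ, P {ω | N ω = j'}) = P (Set.univ) := by
          rw [stmt13_partition hNmeas MeasurableSet.univ]
          simp
        rw [this, measure_univ, one_mul]

lemma stmt13_indepY (hNmeas : Measurable N) (hTmeas : ∀ i, Measurable (Tt i))
    (hXmeas : ∀ i, Measurable (Xx i))
    (hIndep : ∀ (j n : ℕ) (A : ℕ → Set T) (B : ℕ → Set X),
      (∀ i, MeasurableSet (A i)) → (∀ i, MeasurableSet (B i)) →
      P (({ω | N ω = j} ∩ ⋂ i ∈ Finset.range n, {ω | Tt i ω ∈ A i}) ∩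
          ⋂ i ∈ Finset.range n, {ω | Xx i ω ∈ B i})
        = P ({ω | N ω = j} ∩ ⋂ i ∈ Finset.range n, {ω | Tt i ω ∈ A i}) *
          ∏ i ∈ Finset.range n, P {ω | Xx i ω ∈ B i})
    (i : ℕ) : ProbabilityTheory.IndepFun (fun ω => (N ω, Tt i ω)) (Xx i) P := by
  have hY : Measurable (fun ω => (N ω, Tt i ω)) := hNmeas.prodMk (hTmeas i)
  rw [ProbabilityTheory.IndepFun_iff_Indep]
  set p1 : Set (Set Ω) := Set.preimage (fun ω => (N ω, Tt i ω)) ''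
    (Set.image2 (· ×ˢ ·) {s : Set ℕ | MeasurableSet s} {t : Set T | MeasurableSet t}) with hp1def
  set p2 : Set (Set Ω) := Set.preimage (Xx i) '' {B : Set X | MeasurableSet B} with hp2def
  have hpm1 : MeasurableSpace.comap (fun ω => (N ω, Tt i ω)) inferInstance
      = MeasurableSpace.generateFrom p1 := by
    conv_lhs => rw [show (inferInstance : MeasurableSpace (ℕ × T)) =
      Prod.instMeasurableSpace from rfl, ← generateFrom_prod]
    rw [MeasurableSpace.comap_generateFrom]
  have hpm2 : MeasurableSpace.comap (Xx i) inferInstance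
      = MeasurableSpace.generateFrom p2 := by
    conv_lhs => rw [← @MeasurableSpace.generateFrom_measurableSet X _]
    rw [MeasurableSpace.comap_generateFrom]
  have hp1 : IsPiSystem p1 := by
    rintro u ⟨w, hw, rfl⟩ v ⟨w', hw', rfl⟩ -
    rcases hw with ⟨s, hs, t, ht, rfl⟩
    rcases hw' with ⟨s', hs', t', ht', rfl⟩
    simp only [Set.mem_setOf_eq] at hs hs' ht ht'
    refine ⟨(s ∩ s') ×ˢ (t ∩ t'), ⟨s ∩ s', hs.inter hs', t ∩ t', ht.inter ht', rfl⟩, ?_⟩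
    rw [← Set.preimage_inter, Set.prod_inter_prod]
  have hp2 : IsPiSystem p2 := by
    rintro u ⟨B, hB, rfl⟩ v ⟨B', hB', rfl⟩ -
    exact ⟨B ∩ B', hB.inter hB', by rw [← Set.preimage_inter]⟩
  refine ProbabilityTheory.IndepSets.indep hY.comap_le (hXmeas i).comap_le hp1 hp2 hpm1 hpm2 ?_
  rintro u v ⟨w, hw, rfl⟩ ⟨B, hB, rfl⟩
  rcases hw with ⟨s, hs, t, ht, rfl⟩
  rw [Set.mk_preimage_prod]
  simp only [Set.mem_setOf_eq] at hs ht
  exact Filter.Eventually.of_forall fun a => by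
    simpa using stmt13_indepT hNmeas hTmeas hXmeas hIndep s i ht hB

end Indep2

lemma stmt13_change_of_var {γ : Type*} [MeasurableSpace γ]
    {Ω : Type*} [MeasurableSpace Ω] {P : Measure Ω}
    {Z : Ω → γ} (hZ : Measurable Z) {ν : Measure γ} (hZlaw : P.map Z = ν)
    {h : γ → ℝ} (hh : Measurable h) :
    ∫ ω, h (Z ω) ∂P = ∫ x, h x ∂ν := by
  rw [← hZlaw, integral_map hZ.aemeasurable hh.aestronglyMeasurable]

lemma stmt13_integral_indep {β : Type*} [MeasurableSpace β] {γ : Type*} [MeasurableSpace γ]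
    {Ω : Type*} [MeasurableSpace Ω] {P : Measure Ω} [IsProbabilityMeasure P]
    {Y : Ω → β} (hY : Measurable Y) {Z : Ω → γ} (hZ : Measurable Z)
    (hInd : ProbabilityTheory.IndepFun Y Z P)
    {ν : Measure γ} [IsProbabilityMeasure ν] (hZlaw : P.map Z = ν)
    {F : β × γ → ℝ} (hF : Measurable F) (C : ℝ) (hFb : ∀ p, |F p| ≤ C) :
    ∫ ω, F (Y ω, Z ω) ∂P = ∫ ω, (∫ x, F (Y ω, x) ∂ν) ∂P := by
  have hmap : P.map (fun ω => (Y ω, Z ω)) = (P.map Y).prod ν := by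
    rw [← hZlaw]
    exact (ProbabilityTheory.indepFun_iff_map_prod_eq_prod_map_map hY.aemeasurable
      hZ.aemeasurable).mp hInd
  haveI : IsProbabilityMeasure (P.map Y) := Measure.isProbabilityMeasure_map hY.aemeasurable
  have hint : Integrable F ((P.map Y).prod ν) :=
    stmt13_integrable_of_bdd hF.aestronglyMeasurable C hFb
  calc ∫ ω, F (Y ω, Z ω) ∂P
      = ∫ p, F p ∂(P.map (fun ω => (Y ω, Z ω))) :=
        (integral_map (hY.prodMk hZ).aemeasurable hF.aestronglyMeasurable).symm
    _ = ∫ p, F p ∂((P.map Y).prod ν) := by rw [hmap]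
    _ = ∫ y, ∫ x, F (y, x) ∂ν ∂(P.map Y) := integral_prod F hint
    _ = ∫ ω, ∫ x, F (Y ω, x) ∂ν ∂P :=
        integral_map hY.aemeasurable
          (hF.stronglyMeasurable.integral_prod_right').aestronglyMeasurable

lemma stmt13_measurable_nat_comp {Ω : Type*} [MeasurableSpace Ω] {N : Ω → ℕ}
    (hN : Measurable N) {g : ℕ → Ω → ℝ} (hg : ∀ m, Measurable (g m)) :
    Measurable (fun ω => g (N ω) ω) := by
  have h : Measurable (fun p : Ω × ℕ => g p.2 p.1) :=
    measurable_from_prod_countable_left (fun m => hg m)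
  exact h.comp (measurable_id.prodMk hN)

/-- Regular variation of independently marked point processes, Laplace-functional
form, case `k = 0` (Theorem 3.2 of the paper). -/
theorem stmt_13
    {T : Type*} [MetricSpace T] [CompleteSpace T] [TopologicalSpace.SeparableSpace T]
    [MeasurableSpace T] [BorelSpace T]
    {X : Type*} [MetricSpace X] [CompleteSpace X] [TopologicalSpace.SeparableSpace X]
    [MeasurableSpace X] [BorelSpace X]
    (x0 : X) (σ : ℝ → X → X)
    (hσc : ContinuousOn (fun p : ℝ × X => σ p.1 p.2) (Set.Ioi (0 : ℝ) ×ˢ Set.univ))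
    (hσ1 : ∀ x, σ 1 x = x)
    (hσm : ∀ u v : ℝ, 0 < u → 0 < v → ∀ x, σ u (σ v x) = σ (u * v) x)
    (hσ0 : ∀ u : ℝ, 0 < u → σ u x0 = x0)
    (ν : Measure X) [IsProbabilityMeasure ν] (hν0 : ν {x0} = 0)
    (a : ℕ → ℝ) (ha : ∀ n, 0 < a n) (haTop : Tendsto a atTop atTop)
    (μ : Measure X) (hμ0 : μ ≠ 0)
    (hμFin : ∀ ρ > (0 : ℝ), μ {x | ρ ≤ dist x0 x} ≠ ⊤)
    (hRV : ∀ h : X → ℝ, Continuous h → (∃ C, ∀ x, |h x| ≤ C) →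
      (∃ ρ > (0 : ℝ), ∀ x, dist x0 x < ρ → h x = 0) →
      Tendsto (fun n : ℕ => (n : ℝ) * ∫ x, h (σ (a n)⁻¹ x) ∂ν) atTop (𝓝 (∫ x, h x ∂μ)))
    {Ω : Type*} [MeasurableSpace Ω] (P : Measure Ω) [IsProbabilityMeasure P]
    (N : Ω → ℕ) (hNmeas : Measurable N)
    (hNint : Integrable (fun ω => (N ω : ℝ)) P) (hNpos : 0 < ∫ ω, (N ω : ℝ) ∂P)
    (Tt : ℕ → Ω → T) (hTmeas : ∀ i, Measurable (Tt i))
    (Xx : ℕ → Ω → X) (hXmeas : ∀ i, Measurable (Xx i))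
    (hXlaw : ∀ i, Measure.map (Xx i) P = ν)
    (hIndep : ∀ (j n : ℕ) (A : ℕ → Set T) (B : ℕ → Set X),
      (∀ i, MeasurableSet (A i)) → (∀ i, MeasurableSet (B i)) →
      P (({ω | N ω = j} ∩ ⋂ i ∈ Finset.range n, {ω | Tt i ω ∈ A i}) ∩
          ⋂ i ∈ Finset.range n, {ω | Xx i ω ∈ B i})
        = P ({ω | N ω = j} ∩ ⋂ i ∈ Finset.range n, {ω | Tt i ω ∈ A i}) *
          ∏ i ∈ Finset.range n, P {ω | Xx i ω ∈ B i})
    (f : T × X → ℝ) (hfc : Continuous f) (hf0 : ∀ z, 0 ≤ f z) (hfb : ∃ C, ∀ z, f z ≤ C)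
    (r : ℝ) (hr : 0 < r) (hfvan : ∀ t x, dist x0 x < r → f (t, x) = 0) :
    Tendsto (fun n : ℕ => (n : ℝ) *
        ∫ ω, (1 - Real.exp (-∑ i ∈ Finset.range (N ω), f (Tt i ω, σ (a n)⁻¹ (Xx i ω)))) ∂P)
      atTop
      (𝓝 (∫ ω, ∑ i ∈ Finset.range (N ω), ∫ x, (1 - Real.exp (-f (Tt i ω, x))) ∂μ ∂P)) := by
  -- scaling maps are continuous
  have hσcont : ∀ u : ℝ, 0 < u → Continuous (σ u) := by
    intro u hu
    rw [continuous_iff_continuousAt]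
    intro x
    have hopen : IsOpen (Set.Ioi (0 : ℝ) ×ˢ (Set.univ : Set X)) := isOpen_Ioi.prod isOpen_univ
    have h1 : ContinuousAt (fun p : ℝ × X => σ p.1 p.2) (u, x) :=
      hσc.continuousAt (hopen.mem_nhds (by simp [hu]))
    exact h1.comp ((continuous_const.prodMk continuous_id).continuousAt)
  have hσn : ∀ n : ℕ, Continuous (σ (a n)⁻¹) := fun n => hσcont _ (inv_pos.2 (ha n))
  have hσmeas : ∀ n : ℕ, Measurable (σ (a n)⁻¹) := fun n => (hσn n).measurable
  -- the function g
  set g : T × X → ℝ := fun z => 1 - Real.exp (-f z) with hgdef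
  have hgc : Continuous g := continuous_const.sub (Real.continuous_exp.comp hfc.neg)
  have hg0 : ∀ z, 0 ≤ g z := fun z =>
    sub_nonneg.2 (Real.exp_le_one_iff.2 (neg_nonpos.2 (hf0 z)))
  have hg1 : ∀ z, g z ≤ 1 := fun z => sub_le_self _ (Real.exp_pos _).le
  have hgvan : ∀ t x, dist x0 x < r → g (t, x) = 0 := by
    intro t x h
    simp [hgdef, hfvan t x h]
  have hmg : Measurable g := hgc.measurable
  -- the majorant ψ
  set ψ : X → ℝ := fun x => min 1 (max 0 (2 * dist x0 x / r - 1)) with hψdef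
  have hψc : Continuous ψ :=
    continuous_const.min (continuous_const.max
      (((continuous_const.mul (continuous_const.dist continuous_id)).div_const r).sub
        continuous_const))
  have hψ0 : ∀ x, 0 ≤ ψ x := fun x => le_min zero_le_one (le_max_left _ _)
  have hψ1 : ∀ x, ψ x ≤ 1 := fun x => min_le_left _ _
  have hψvan : ∀ x, dist x0 x < r / 2 → ψ x = 0 := by
    intro x h
    have h2 : 2 * dist x0 x / r - 1 ≤ 0 := by
      rw [sub_nonpos, div_le_one hr]; linarith
    simp only [hψdef]
    rw [max_eq_left h2, min_eq_right zero_le_one]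
  have hψone : ∀ x, r ≤ dist x0 x → ψ x = 1 := by
    intro x h
    have h2 : (1 : ℝ) ≤ 2 * dist x0 x / r - 1 := by
      rw [le_sub_iff_add_le, le_div_iff₀ hr]; linarith
    simp only [hψdef]
    rw [min_eq_left (le_trans h2 (le_max_right _ _))]
  have hgψ : ∀ t x, g (t, x) ≤ ψ x := by
    intro t x
    by_cases h : dist x0 x < r
    · rw [hgvan t x h]; exact hψ0 x
    · rw [hψone x (not_lt.1 h)]; exact hg1 _
  -- ν-integrals of scaled functions
  have hintg : ∀ (n : ℕ) (t : T), Integrable (fun x => g (t, σ (a n)⁻¹ x)) ν := by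
    intro n t
    refine stmt13_integrable_of_bdd
      ((hgc.comp (continuous_const.prodMk (hσn n))).measurable).aestronglyMeasurable 1 ?_
    intro x
    exact abs_le.2 ⟨by linarith [hg0 (t, σ (a n)⁻¹ x)], hg1 _⟩
  have hintψ : ∀ n : ℕ, Integrable (fun x => ψ (σ (a n)⁻¹ x)) ν := by
    intro n
    refine stmt13_integrable_of_bdd
      ((hψc.comp (hσn n)).measurable).aestronglyMeasurable 1 ?_
    intro x
    exact abs_le.2 ⟨by linarith [hψ0 (σ (a n)⁻¹ x)], hψ1 _⟩
  -- the quantity q n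
  set q : ℕ → ℝ := fun n => ∫ x, ψ (σ (a n)⁻¹ x) ∂ν with hqdef
  have hq0 : ∀ n, 0 ≤ q n := fun n => integral_nonneg (fun x => hψ0 _)
  have hqlim : Tendsto (fun n : ℕ => (n : ℝ) * q n) atTop (𝓝 (∫ x, ψ x ∂μ)) :=
    hRV ψ hψc ⟨1, fun x => abs_le.2 ⟨by linarith [hψ0 x], hψ1 x⟩⟩
      ⟨r / 2, half_pos hr, hψvan⟩
  obtain ⟨K, hK⟩ : ∃ K, ∀ n : ℕ, (n : ℝ) * q n ≤ K := by
    obtain ⟨K, hK⟩ := hqlim.isBoundedUnder_le.bddAbove_range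
    exact ⟨K, fun n => hK ⟨n, rfl⟩⟩
  have hK0 : 0 ≤ K := le_trans (by simp) (hK 0)
  have hqzero : Tendsto q atTop (𝓝 0) := by
    refine squeeze_zero' (Filter.Eventually.of_forall hq0) ?_
      (tendsto_const_div_atTop_nhds_zero_nat K)
    filter_upwards [Filter.eventually_ge_atTop 1] with n hn
    have hn0 : (0 : ℝ) < (n : ℝ) := by exact_mod_cast hn
    rw [le_div_iff₀ hn0, mul_comm]
    exact hK n
  -- the functions Gn and G
  set Gn : ℕ → T → ℝ := fun n t => ∫ x, g (t, σ (a n)⁻¹ x) ∂ν with hGndef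
  set G : T → ℝ := fun t => ∫ x, g (t, x) ∂μ with hGdef
  have hGn0 : ∀ n t, 0 ≤ Gn n t := fun n t => integral_nonneg (fun x => hg0 _)
  have hGnq : ∀ n t, Gn n t ≤ q n := fun n t =>
    integral_mono (hintg n t) (hintψ n) (fun x => hgψ t _)
  have hnGnK : ∀ (n : ℕ) (t : T), (n : ℝ) * Gn n t ≤ K := fun n t =>
    le_trans (mul_le_mul_of_nonneg_left (hGnq n t) (Nat.cast_nonneg n)) (hK n)
  have hGnlim : ∀ t, Tendsto (fun n : ℕ => (n : ℝ) * Gn n t) atTop (𝓝 (G t)) := by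
    intro t
    exact hRV (fun x => g (t, x)) (hgc.comp (continuous_const.prodMk continuous_id))
      ⟨1, fun x => abs_le.2 ⟨by linarith [hg0 (t, x)], hg1 _⟩⟩
      ⟨r, hr, fun x hx => hgvan t x hx⟩
  have hG0 : ∀ t, 0 ≤ G t := fun t => integral_nonneg (fun x => hg0 _)
  have hGK : ∀ t, G t ≤ K := fun t =>
    le_of_tendsto (hGnlim t) (Filter.Eventually.of_forall (fun n => hnGnK n t))
  -- continuity of Gn and G
  have hGncont : ∀ n, Continuous (Gn n) := by
    intro n
    refine continuous_of_dominated
      (fun t => ((hgc.comp (continuous_const.prodMk (hσn n))).measurable).aestronglyMeasurable)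
      (bound := fun _ => (1 : ℝ)) ?_ (integrable_const 1) ?_
    · intro t
      refine Filter.Eventually.of_forall fun x => ?_
      rw [Real.norm_eq_abs]
      exact abs_le.2 ⟨by linarith [hg0 (t, σ (a n)⁻¹ x)], hg1 _⟩
    · refine Filter.Eventually.of_forall fun x => ?_
      exact hgc.comp (continuous_id.prodMk continuous_const)
  have hψμ : Integrable ψ μ := by
    have hS : MeasurableSet {x : X | r / 2 ≤ dist x0 x} :=
      (isClosed_le continuous_const (continuous_const.dist continuous_id)).measurableSet
    refine ⟨hψc.measurable.aestronglyMeasurable, ?_⟩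
    have hb : ∀ x, (‖ψ x‖₊ : ENNReal)
        ≤ Set.indicator {x : X | r / 2 ≤ dist x0 x} (fun _ => (1 : ENNReal)) x := by
      intro x
      by_cases hx : x ∈ {x : X | r / 2 ≤ dist x0 x}
      · rw [Set.indicator_of_mem hx]
        have : ‖ψ x‖ ≤ 1 := by
          rw [Real.norm_eq_abs]
          exact abs_le.2 ⟨by linarith [hψ0 x], hψ1 x⟩
        rw [← enorm_eq_nnnorm, ← ofReal_norm]
        exact le_trans (ENNReal.ofReal_le_ofReal this) (by simp)
      · rw [Set.indicator_of_notMem hx]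
        have : ψ x = 0 := hψvan x (not_le.1 hx)
        simp [this]
    rw [HasFiniteIntegral]
    calc ∫⁻ x, (‖ψ x‖₊ : ENNReal) ∂μ
        ≤ ∫⁻ x, Set.indicator {x : X | r / 2 ≤ dist x0 x} (fun _ => (1 : ENNReal)) x ∂μ :=
          lintegral_mono hb
      _ = μ {x : X | r / 2 ≤ dist x0 x} := by
          rw [lintegral_indicator hS]
          simp
      _ < ⊤ := (hμFin (r / 2) (half_pos hr)).lt_top
  have hGcont : Continuous G := by
    refine continuous_of_dominated
      (fun t => ((hgc.comp (continuous_const.prodMk continuous_id)).measurable).aestronglyMeasurable)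
      (bound := ψ) ?_ hψμ ?_
    · intro t
      refine Filter.Eventually.of_forall fun x => ?_
      rw [Real.norm_eq_abs]
      exact abs_le.2 ⟨by linarith [hg0 (t, x), hψ0 x], hgψ t x⟩
    · refine Filter.Eventually.of_forall fun x => ?_
      exact hgc.comp (continuous_id.prodMk continuous_const)
  -- indicator notation
  set ind : ℕ → ℕ → ℝ := fun m j => if j = m then 1 else 0 with hinddef
  have hind0 : ∀ m j, 0 ≤ ind m j := by
    intro m j
    simp only [hinddef]
    split <;> norm_num
  have hind1 : ∀ m j, ind m j ≤ 1 := by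
    intro m j
    simp only [hinddef]
    split <;> norm_num
  have hindmeasℕ : ∀ m : ℕ, Measurable (ind m) := fun m => measurable_of_countable (ind m)
  have hindmeas : ∀ m : ℕ, Measurable (fun ω => ind m (N ω)) :=
    fun m => (hindmeasℕ m).comp hNmeas
  -- measurability on Ω
  have hmeas_gi : ∀ n i : ℕ, Measurable (fun ω => g (Tt i ω, σ (a n)⁻¹ (Xx i ω))) :=
    fun n i => hmg.comp ((hTmeas i).prodMk ((hσmeas n).comp (hXmeas i)))
  have hmeas_ψi : ∀ n i : ℕ, Measurable (fun ω => ψ (σ (a n)⁻¹ (Xx i ω))) :=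
    fun n i => (hψc.comp (hσn n)).measurable.comp (hXmeas i)
  have hmeas_ei : ∀ n i : ℕ,
      Measurable (fun ω => Real.exp (-f (Tt i ω, σ (a n)⁻¹ (Xx i ω)))) :=
    fun n i => (Real.continuous_exp.comp hfc.neg).measurable.comp
      ((hTmeas i).prodMk ((hσmeas n).comp (hXmeas i)))
  -- key distributional identity
  have hP1 : ∀ n m i : ℕ,
      ∫ ω, ind m (N ω) * g (Tt i ω, σ (a n)⁻¹ (Xx i ω)) ∂P
        = ∫ ω, ind m (N ω) * Gn n (Tt i ω) ∂P := by
    intro n m i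
    have hY : Measurable (fun ω => (N ω, Tt i ω)) := hNmeas.prodMk (hTmeas i)
    have hF : Measurable (fun p : (ℕ × T) × X => ind m p.1.1 * g (p.1.2, σ (a n)⁻¹ p.2)) :=
      ((hindmeasℕ m).comp (measurable_fst.comp measurable_fst)).mul
        (hmg.comp ((measurable_snd.comp measurable_fst).prodMk
          ((hσmeas n).comp measurable_snd)))
    have hFb : ∀ p : (ℕ × T) × X, |ind m p.1.1 * g (p.1.2, σ (a n)⁻¹ p.2)| ≤ 1 := by
      intro p
      have h1 : 0 ≤ ind m p.1.1 * g (p.1.2, σ (a n)⁻¹ p.2) :=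
        mul_nonneg (hind0 _ _) (hg0 _)
      have h2 : ind m p.1.1 * g (p.1.2, σ (a n)⁻¹ p.2) ≤ 1 := by
        nlinarith [hind0 m p.1.1, hind1 m p.1.1, hg0 (p.1.2, σ (a n)⁻¹ p.2),
          hg1 (p.1.2, σ (a n)⁻¹ p.2)]
      exact abs_le.2 ⟨by linarith, h2⟩
    have key := stmt13_integral_indep (P := P) hY (hXmeas i)
      (stmt13_indepY hNmeas hTmeas hXmeas hIndep i) (hXlaw i) hF 1 hFb
    calc ∫ ω, ind m (N ω) * g (Tt i ω, σ (a n)⁻¹ (Xx i ω)) ∂P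
        = ∫ ω, (∫ x, ind m (N ω) * g (Tt i ω, σ (a n)⁻¹ x) ∂ν) ∂P := key
      _ = ∫ ω, ind m (N ω) * Gn n (Tt i ω) ∂P := by
          refine integral_congr_ae (Filter.Eventually.of_forall fun ω => ?_)
          show ∫ x, ind m (N ω) * g (Tt i ω, σ (a n)⁻¹ x) ∂ν
            = ind m (N ω) * Gn n (Tt i ω)
          rw [integral_const_mul]
  -- change of variables for ψ
  have hqrep : ∀ n i : ℕ, ∫ ω, ψ (σ (a n)⁻¹ (Xx i ω)) ∂P = q n :=
    fun n i => stmt13_change_of_var (hXmeas i) (hXlaw i) ((hψc.comp (hσn n)).measurable)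
  -- cross moments
  have hintψΩ : ∀ n i : ℕ, Integrable (fun ω => ψ (σ (a n)⁻¹ (Xx i ω))) P := by
    intro n i
    refine stmt13_integrable_of_bdd (hmeas_ψi n i).aestronglyMeasurable 1 fun ω => ?_
    exact abs_le.2 ⟨by linarith [hψ0 (σ (a n)⁻¹ (Xx i ω))], hψ1 _⟩
  have hP2 : ∀ (n i j : ℕ), i ≠ j →
      ∫ ω, ψ (σ (a n)⁻¹ (Xx i ω)) * ψ (σ (a n)⁻¹ (Xx j ω)) ∂P = q n * q n := by
    intro n i j hij
    have hInd := (stmt13_indepXX hNmeas hXmeas hIndep hij).comp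
      ((hψc.comp (hσn n)).measurable) ((hψc.comp (hσn n)).measurable)
    have := hInd.integral_mul_eq_mul_integral (hintψΩ n i).aestronglyMeasurable (hintψΩ n j).aestronglyMeasurable
    calc ∫ ω, ψ (σ (a n)⁻¹ (Xx i ω)) * ψ (σ (a n)⁻¹ (Xx j ω)) ∂P
        = (∫ ω, ψ (σ (a n)⁻¹ (Xx i ω)) ∂P) * ∫ ω, ψ (σ (a n)⁻¹ (Xx j ω)) ∂P := this
      _ = q n * q n := by rw [hqrep n i, hqrep n j]
  -- integral of the indicator
  have hindint : ∀ m : ℕ, ∫ ω, ind m (N ω) ∂P = (P {ω | N ω = m}).toReal := by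
    intro m
    have hs : MeasurableSet {ω | N ω = m} := hNmeas (measurableSet_singleton m)
    have : (fun ω => ind m (N ω))
        = Set.indicator {ω | N ω = m} (fun _ => (1 : ℝ)) := by
      funext ω
      simp [hinddef, Set.indicator_apply]
    rw [this, integral_indicator_const (1 : ℝ) hs]
    simp [Measure.real]
  -- partition of Ω according to N
  have hsetmeas : ∀ m : ℕ, MeasurableSet {ω | N ω = m} :=
    fun m => hNmeas (measurableSet_singleton m)
  have hUnivU : (⋃ m : ℕ, {ω | N ω = m}) = Set.univ := by
    ext ω
    simp only [Set.mem_iUnion, Set.mem_setOf_eq, Set.mem_univ, iff_true]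
    exact ⟨N ω, rfl⟩
  have hdisj : Pairwise (Function.onFun Disjoint (fun m : ℕ => {ω | N ω = m})) := by
    intro m k hmk
    refine Set.disjoint_left.2 ?_
    intro ω hm hk
    simp only [Set.mem_setOf_eq] at hm hk
    exact hmk (hm.symm.trans hk)
  have hpart : ∀ F : Ω → ℝ, Integrable F P →
      HasSum (fun m => ∫ ω in {ω | N ω = m}, F ω ∂P) (∫ ω, F ω ∂P) := by
    intro F hF
    have h := hasSum_integral_iUnion (μ := P) (f := F) hsetmeas hdisj
      (by rw [hUnivU]; exact integrableOn_univ.2 hF)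
    rwa [hUnivU, Measure.restrict_univ] at h
  -- the integrands
  have hSn : ∀ n : ℕ, Measurable
      (fun ω => ∑ i ∈ Finset.range (N ω), f (Tt i ω, σ (a n)⁻¹ (Xx i ω))) := by
    intro n
    exact stmt13_measurable_nat_comp hNmeas
      (g := fun m ω => ∑ i ∈ Finset.range m, f (Tt i ω, σ (a n)⁻¹ (Xx i ω)))
      (fun m => Finset.measurable_sum _
        (fun i _ => hfc.measurable.comp ((hTmeas i).prodMk ((hσmeas n).comp (hXmeas i)))))
  have hFnmeas : ∀ n : ℕ, Measurable (fun ω =>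
      1 - Real.exp (-∑ i ∈ Finset.range (N ω), f (Tt i ω, σ (a n)⁻¹ (Xx i ω)))) :=
    fun n => measurable_const.sub (Real.continuous_exp.measurable.comp (hSn n).neg)
  have hexp01 : ∀ s : ℝ, 0 ≤ s → 0 ≤ 1 - Real.exp (-s) ∧ 1 - Real.exp (-s) ≤ 1 := by
    intro s hs
    constructor
    · have : Real.exp (-s) ≤ 1 := Real.exp_le_one_iff.2 (by linarith)
      linarith
    · have : 0 < Real.exp (-s) := Real.exp_pos _
      linarith
  have hFnint : ∀ n : ℕ, Integrable (fun ω =>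
      1 - Real.exp (-∑ i ∈ Finset.range (N ω), f (Tt i ω, σ (a n)⁻¹ (Xx i ω)))) P := by
    intro n
    refine stmt13_integrable_of_bdd (hFnmeas n).aestronglyMeasurable 1 fun ω => ?_
    have h := hexp01 (∑ i ∈ Finset.range (N ω), f (Tt i ω, σ (a n)⁻¹ (Xx i ω)))
      (Finset.sum_nonneg (fun i _ => hf0 _))
    exact abs_le.2 ⟨by linarith [h.1], h.2⟩
  have hFmmeas : ∀ n m : ℕ, Measurable (fun ω =>
      1 - Real.exp (-∑ i ∈ Finset.range m, f (Tt i ω, σ (a n)⁻¹ (Xx i ω)))) := by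
    intro n m
    refine measurable_const.sub (Real.continuous_exp.measurable.comp ?_)
    exact (Finset.measurable_sum _
      (fun i _ => hfc.measurable.comp ((hTmeas i).prodMk ((hσmeas n).comp (hXmeas i))))).neg
  -- decomposition of the pre-limit integrals
  have hdecomp : ∀ n : ℕ, HasSum
      (fun m => ∫ ω, ind m (N ω) *
        (1 - Real.exp (-∑ i ∈ Finset.range m, f (Tt i ω, σ (a n)⁻¹ (Xx i ω)))) ∂P)
      (∫ ω, (1 - Real.exp (-∑ i ∈ Finset.range (N ω), f (Tt i ω, σ (a n)⁻¹ (Xx i ω)))) ∂P) := by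
    intro n
    have h := hpart _ (hFnint n)
    have heq : ∀ m : ℕ, ∫ ω in {ω | N ω = m},
        (1 - Real.exp (-∑ i ∈ Finset.range (N ω), f (Tt i ω, σ (a n)⁻¹ (Xx i ω)))) ∂P
        = ∫ ω, ind m (N ω) *
          (1 - Real.exp (-∑ i ∈ Finset.range m, f (Tt i ω, σ (a n)⁻¹ (Xx i ω)))) ∂P := by
      intro m
      rw [← integral_indicator (hsetmeas m)]
      congr 1
      funext ω
      by_cases h' : N ω = m
      · simp [Set.indicator_apply, Set.mem_setOf_eq, h', hinddef]
      · simp [Set.indicator_apply, Set.mem_setOf_eq, h', hinddef]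
    exact (funext heq : _) ▸ h
  -- decomposition of the limit integral
  have hGsum_meas : Measurable (fun ω => ∑ i ∈ Finset.range (N ω), G (Tt i ω)) :=
    stmt13_measurable_nat_comp hNmeas
      (g := fun m ω => ∑ i ∈ Finset.range m, G (Tt i ω))
      (fun m => Finset.measurable_sum _ (fun i _ => hGcont.measurable.comp (hTmeas i)))
  have hGsum_bd : ∀ ω, ‖∑ i ∈ Finset.range (N ω), G (Tt i ω)‖ ≤ K * (N ω : ℝ) := by
    intro ω
    rw [Real.norm_eq_abs, abs_of_nonneg (Finset.sum_nonneg (fun i _ => hG0 _))]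
    calc ∑ i ∈ Finset.range (N ω), G (Tt i ω)
        ≤ ∑ _i ∈ Finset.range (N ω), K := Finset.sum_le_sum (fun i _ => hGK _)
      _ = K * (N ω : ℝ) := by simp [mul_comm]
  have hGsum_int : Integrable (fun ω => ∑ i ∈ Finset.range (N ω), G (Tt i ω)) P := by
    refine (hNint.const_mul K).mono' hGsum_meas.aestronglyMeasurable ?_
    exact Filter.Eventually.of_forall hGsum_bd
  have hLdecomp : HasSum
      (fun m => ∫ ω, ind m (N ω) * ∑ i ∈ Finset.range m, G (Tt i ω) ∂P)
      (∫ ω, ∑ i ∈ Finset.range (N ω), G (Tt i ω) ∂P) := by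
    have h := hpart _ hGsum_int
    have heq : ∀ m : ℕ, ∫ ω in {ω | N ω = m}, (∑ i ∈ Finset.range (N ω), G (Tt i ω)) ∂P
        = ∫ ω, ind m (N ω) * ∑ i ∈ Finset.range m, G (Tt i ω) ∂P := by
      intro m
      rw [← integral_indicator (hsetmeas m)]
      congr 1
      funext ω
      by_cases h' : N ω = m
      · simp [Set.indicator_apply, Set.mem_setOf_eq, h', hinddef]
      · simp [Set.indicator_apply, Set.mem_setOf_eq, h', hinddef]
    exact (funext heq : _) ▸ h
  -- products of exponential factors
  have hgid : ∀ (n j : ℕ) (ω : Ω), g (Tt j ω, σ (a n)⁻¹ (Xx j ω))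
      = 1 - Real.exp (-f (Tt j ω, σ (a n)⁻¹ (Xx j ω))) := fun n j ω => rfl
  have he0 : ∀ (n j : ℕ) (ω : Ω), 0 ≤ Real.exp (-f (Tt j ω, σ (a n)⁻¹ (Xx j ω))) :=
    fun n j ω => (Real.exp_pos _).le
  have he1 : ∀ (n j : ℕ) (ω : Ω), Real.exp (-f (Tt j ω, σ (a n)⁻¹ (Xx j ω))) ≤ 1 :=
    fun n j ω => Real.exp_le_one_iff.2 (neg_nonpos.2 (hf0 _))
  have hmeasprod : ∀ n i : ℕ, Measurable
      (fun ω => ∏ j ∈ Finset.range i, Real.exp (-f (Tt j ω, σ (a n)⁻¹ (Xx j ω)))) :=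
    fun n i => Finset.measurable_prod _ (fun j _ => hmeas_ei n j)
  have hprod0 : ∀ (n i : ℕ) (ω : Ω),
      0 ≤ ∏ j ∈ Finset.range i, Real.exp (-f (Tt j ω, σ (a n)⁻¹ (Xx j ω))) :=
    fun n i ω => Finset.prod_nonneg (fun j _ => he0 n j ω)
  have hprod1 : ∀ (n i : ℕ) (ω : Ω),
      (∏ j ∈ Finset.range i, Real.exp (-f (Tt j ω, σ (a n)⁻¹ (Xx j ω)))) ≤ 1 :=
    fun n i ω => Finset.prod_le_one (fun j _ => he0 n j ω) (fun j _ => he1 n j ω)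
  have hexpprod : ∀ (n m : ℕ) (ω : Ω),
      Real.exp (-∑ i ∈ Finset.range m, f (Tt i ω, σ (a n)⁻¹ (Xx i ω)))
        = ∏ i ∈ Finset.range m, Real.exp (-f (Tt i ω, σ (a n)⁻¹ (Xx i ω))) := by
    intro n m ω
    rw [← Finset.sum_neg_distrib, Real.exp_sum]
  -- integrability of the various products on Ω
  have hint1 : ∀ n m i : ℕ, Integrable
      (fun ω => ind m (N ω) * g (Tt i ω, σ (a n)⁻¹ (Xx i ω))) P := by
    intro n m i
    refine stmt13_integrable_of_bdd
      ((hindmeas m).mul (hmeas_gi n i)).aestronglyMeasurable 1 fun ω => ?_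
    have h0 := mul_nonneg (hind0 m (N ω)) (hg0 (Tt i ω, σ (a n)⁻¹ (Xx i ω)))
    refine abs_le.2 ⟨by linarith, ?_⟩
    nlinarith [hind0 m (N ω), hind1 m (N ω), hg0 (Tt i ω, σ (a n)⁻¹ (Xx i ω)),
      hg1 (Tt i ω, σ (a n)⁻¹ (Xx i ω))]
  have hint2 : ∀ n m i : ℕ, Integrable (fun ω => ind m (N ω) *
      ((1 - ∏ j ∈ Finset.range i, Real.exp (-f (Tt j ω, σ (a n)⁻¹ (Xx j ω)))) *
        g (Tt i ω, σ (a n)⁻¹ (Xx i ω)))) P := by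
    intro n m i
    refine stmt13_integrable_of_bdd
      ((hindmeas m).mul (((measurable_const.sub (hmeasprod n i))).mul
        (hmeas_gi n i))).aestronglyMeasurable 1 fun ω => ?_
    have hA : 0 ≤ (1 - ∏ j ∈ Finset.range i, Real.exp (-f (Tt j ω, σ (a n)⁻¹ (Xx j ω)))) *
        g (Tt i ω, σ (a n)⁻¹ (Xx i ω)) :=
      mul_nonneg (by linarith [hprod1 n i ω]) (hg0 _)
    have hB : (1 - ∏ j ∈ Finset.range i, Real.exp (-f (Tt j ω, σ (a n)⁻¹ (Xx j ω)))) *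
        g (Tt i ω, σ (a n)⁻¹ (Xx i ω)) ≤ 1 := by
      nlinarith [hprod0 n i ω, hprod1 n i ω, hg0 (Tt i ω, σ (a n)⁻¹ (Xx i ω)),
        hg1 (Tt i ω, σ (a n)⁻¹ (Xx i ω))]
    have h0 := mul_nonneg (hind0 m (N ω)) hA
    refine abs_le.2 ⟨by linarith, ?_⟩
    nlinarith [hind0 m (N ω), hind1 m (N ω)]
  have hintψψ : ∀ n i j : ℕ, Integrable
      (fun ω => ψ (σ (a n)⁻¹ (Xx j ω)) * ψ (σ (a n)⁻¹ (Xx i ω))) P := by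
    intro n i j
    refine stmt13_integrable_of_bdd
      ((hmeas_ψi n j).mul (hmeas_ψi n i)).aestronglyMeasurable 1 fun ω => ?_
    have h0 := mul_nonneg (hψ0 (σ (a n)⁻¹ (Xx j ω))) (hψ0 (σ (a n)⁻¹ (Xx i ω)))
    refine abs_le.2 ⟨by linarith, ?_⟩
    nlinarith [hψ1 (σ (a n)⁻¹ (Xx j ω)), hψ1 (σ (a n)⁻¹ (Xx i ω)),
      hψ0 (σ (a n)⁻¹ (Xx j ω)), hψ0 (σ (a n)⁻¹ (Xx i ω))]
  -- interchange identity
  have hswap : ∀ n m i : ℕ,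
      (n : ℝ) * ∫ ω, ind m (N ω) * g (Tt i ω, σ (a n)⁻¹ (Xx i ω)) ∂P
        = ∫ ω, ind m (N ω) * ((n : ℝ) * Gn n (Tt i ω)) ∂P := by
    intro n m i
    rw [hP1 n m i, ← integral_const_mul]
    congr 1
    funext ω
    ring
  -- main term convergence
  have hMainLim : ∀ m i : ℕ, Tendsto
      (fun n : ℕ => (n : ℝ) * ∫ ω, ind m (N ω) * g (Tt i ω, σ (a n)⁻¹ (Xx i ω)) ∂P)
      atTop (𝓝 (∫ ω, ind m (N ω) * G (Tt i ω) ∂P)) := by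
    intro m i
    have hDCT : Tendsto
        (fun n : ℕ => ∫ ω, ind m (N ω) * ((n : ℝ) * Gn n (Tt i ω)) ∂P)
        atTop (𝓝 (∫ ω, ind m (N ω) * G (Tt i ω) ∂P)) := by
      refine tendsto_integral_of_dominated_convergence (fun _ => K)
        (fun n => ((hindmeas m).mul
          (measurable_const.mul ((hGncont n).measurable.comp (hTmeas i)))).aestronglyMeasurable)
        (integrable_const K) ?_ ?_
      · intro n
        refine Filter.Eventually.of_forall fun ω => ?_
        rw [Real.norm_eq_abs]
        have h1 : 0 ≤ (n : ℝ) * Gn n (Tt i ω) := mul_nonneg (Nat.cast_nonneg n) (hGn0 n _)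
        have h2 := hnGnK n (Tt i ω)
        have h3 := hind0 m (N ω)
        have h4 := hind1 m (N ω)
        rw [abs_of_nonneg (mul_nonneg h3 h1)]
        nlinarith
      · refine Filter.Eventually.of_forall fun ω => ?_
        exact (hGnlim (Tt i ω)).const_mul _
    exact hDCT.congr (fun n => (hswap n m i).symm)
  -- error term convergence
  have hErr : ∀ m i : ℕ, Tendsto
      (fun n : ℕ => (n : ℝ) * ∫ ω, ind m (N ω) *
        ((1 - ∏ j ∈ Finset.range i, Real.exp (-f (Tt j ω, σ (a n)⁻¹ (Xx j ω)))) *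
          g (Tt i ω, σ (a n)⁻¹ (Xx i ω))) ∂P) atTop (𝓝 0) := by
    intro m i
    have hub : ∀ n : ℕ, (n : ℝ) * ∫ ω, ind m (N ω) *
        ((1 - ∏ j ∈ Finset.range i, Real.exp (-f (Tt j ω, σ (a n)⁻¹ (Xx j ω)))) *
          g (Tt i ω, σ (a n)⁻¹ (Xx i ω))) ∂P ≤ (i : ℝ) * K * q n := by
      intro n
      have hptw : ∀ ω : Ω, ind m (N ω) *
          ((1 - ∏ j ∈ Finset.range i, Real.exp (-f (Tt j ω, σ (a n)⁻¹ (Xx j ω)))) *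
            g (Tt i ω, σ (a n)⁻¹ (Xx i ω)))
          ≤ ∑ j ∈ Finset.range i, ψ (σ (a n)⁻¹ (Xx j ω)) * ψ (σ (a n)⁻¹ (Xx i ω)) := by
        intro ω
        have h2 : (1 - ∏ j ∈ Finset.range i, Real.exp (-f (Tt j ω, σ (a n)⁻¹ (Xx j ω))))
            ≤ ∑ j ∈ Finset.range i, (1 - Real.exp (-f (Tt j ω, σ (a n)⁻¹ (Xx j ω)))) :=
          stmt13_one_sub_prod_le _ (fun j => he0 n j ω) (fun j => he1 n j ω) i
        have h3 : ∑ j ∈ Finset.range i, (1 - Real.exp (-f (Tt j ω, σ (a n)⁻¹ (Xx j ω))))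
            ≤ ∑ j ∈ Finset.range i, ψ (σ (a n)⁻¹ (Xx j ω)) :=
          Finset.sum_le_sum (fun j _ => by rw [← hgid n j ω]; exact hgψ _ _)
        have h4 : (1 - ∏ j ∈ Finset.range i, Real.exp (-f (Tt j ω, σ (a n)⁻¹ (Xx j ω)))) *
            g (Tt i ω, σ (a n)⁻¹ (Xx i ω))
            ≤ (∑ j ∈ Finset.range i, ψ (σ (a n)⁻¹ (Xx j ω))) * ψ (σ (a n)⁻¹ (Xx i ω)) := by
          refine mul_le_mul (le_trans h2 h3) (hgψ _ _) (hg0 _) ?_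
          exact Finset.sum_nonneg (fun j _ => hψ0 _)
        have h5 : ind m (N ω) *
            ((1 - ∏ j ∈ Finset.range i, Real.exp (-f (Tt j ω, σ (a n)⁻¹ (Xx j ω)))) *
              g (Tt i ω, σ (a n)⁻¹ (Xx i ω)))
            ≤ (1 - ∏ j ∈ Finset.range i, Real.exp (-f (Tt j ω, σ (a n)⁻¹ (Xx j ω)))) *
              g (Tt i ω, σ (a n)⁻¹ (Xx i ω)) := by
          have hA : 0 ≤ (1 - ∏ j ∈ Finset.range i,
              Real.exp (-f (Tt j ω, σ (a n)⁻¹ (Xx j ω)))) *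
              g (Tt i ω, σ (a n)⁻¹ (Xx i ω)) :=
            mul_nonneg (by linarith [hprod1 n i ω]) (hg0 _)
          nlinarith [hind0 m (N ω), hind1 m (N ω)]
        calc ind m (N ω) * ((1 - ∏ j ∈ Finset.range i,
              Real.exp (-f (Tt j ω, σ (a n)⁻¹ (Xx j ω)))) *
              g (Tt i ω, σ (a n)⁻¹ (Xx i ω)))
            ≤ (∑ j ∈ Finset.range i, ψ (σ (a n)⁻¹ (Xx j ω))) * ψ (σ (a n)⁻¹ (Xx i ω)) :=
              le_trans h5 h4
          _ = ∑ j ∈ Finset.range i, ψ (σ (a n)⁻¹ (Xx j ω)) * ψ (σ (a n)⁻¹ (Xx i ω)) :=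
              Finset.sum_mul _ _ _
      have hIle : ∫ ω, ind m (N ω) *
          ((1 - ∏ j ∈ Finset.range i, Real.exp (-f (Tt j ω, σ (a n)⁻¹ (Xx j ω)))) *
            g (Tt i ω, σ (a n)⁻¹ (Xx i ω))) ∂P
          ≤ ∑ j ∈ Finset.range i, (q n * q n) := by
        calc ∫ ω, ind m (N ω) *
            ((1 - ∏ j ∈ Finset.range i, Real.exp (-f (Tt j ω, σ (a n)⁻¹ (Xx j ω)))) *
              g (Tt i ω, σ (a n)⁻¹ (Xx i ω))) ∂P
            ≤ ∫ ω, ∑ j ∈ Finset.range i,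
                ψ (σ (a n)⁻¹ (Xx j ω)) * ψ (σ (a n)⁻¹ (Xx i ω)) ∂P :=
              integral_mono (hint2 n m i)
                (integrable_finset_sum _ (fun j _ => hintψψ n i j)) hptw
          _ = ∑ j ∈ Finset.range i,
                ∫ ω, ψ (σ (a n)⁻¹ (Xx j ω)) * ψ (σ (a n)⁻¹ (Xx i ω)) ∂P :=
              integral_finset_sum _ (fun j _ => hintψψ n i j)
          _ ≤ ∑ j ∈ Finset.range i, (q n * q n) := by
              refine Finset.sum_le_sum fun j hj => ?_
              have hji : j ≠ i := Nat.ne_of_lt (Finset.mem_range.1 hj)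
              rw [hP2 n j i hji]
      have hi0 : (0 : ℝ) ≤ (i : ℝ) := Nat.cast_nonneg i
      have hIle' : ∫ ω, ind m (N ω) *
          ((1 - ∏ j ∈ Finset.range i, Real.exp (-f (Tt j ω, σ (a n)⁻¹ (Xx j ω)))) *
            g (Tt i ω, σ (a n)⁻¹ (Xx i ω))) ∂P ≤ (i : ℝ) * (q n * q n) := by
        simpa [Finset.sum_const, Finset.card_range, nsmul_eq_mul] using hIle
      calc (n : ℝ) * ∫ ω, ind m (N ω) *
          ((1 - ∏ j ∈ Finset.range i, Real.exp (-f (Tt j ω, σ (a n)⁻¹ (Xx j ω)))) *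
            g (Tt i ω, σ (a n)⁻¹ (Xx i ω))) ∂P
          ≤ (n : ℝ) * ((i : ℝ) * (q n * q n)) :=
            mul_le_mul_of_nonneg_left hIle' (Nat.cast_nonneg n)
        _ ≤ (i : ℝ) * K * q n := by
            have h1 : (0 : ℝ) ≤ q n := hq0 n
            have h2 := hK n
            nlinarith [mul_nonneg (mul_nonneg hi0 h1) (sub_nonneg.2 h2)]
    have hlb : ∀ n : ℕ, 0 ≤ (n : ℝ) * ∫ ω, ind m (N ω) *
        ((1 - ∏ j ∈ Finset.range i, Real.exp (-f (Tt j ω, σ (a n)⁻¹ (Xx j ω)))) *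
          g (Tt i ω, σ (a n)⁻¹ (Xx i ω))) ∂P := by
      intro n
      refine mul_nonneg (Nat.cast_nonneg n) (integral_nonneg fun ω => ?_)
      refine mul_nonneg (hind0 m (N ω)) (mul_nonneg ?_ (hg0 _))
      linarith [hprod1 n i ω]
    have hzero : Tendsto (fun n : ℕ => (i : ℝ) * K * q n) atTop (𝓝 0) := by
      have := hqzero.const_mul ((i : ℝ) * K)
      simpa using this
    exact squeeze_zero hlb hub hzero
  -- integrability of the limit summands
  have hintG : ∀ m i : ℕ, Integrable (fun ω => ind m (N ω) * G (Tt i ω)) P := by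
    intro m i
    refine stmt13_integrable_of_bdd
      ((hindmeas m).mul (hGcont.measurable.comp (hTmeas i))).aestronglyMeasurable (K + 1)
      fun ω => ?_
    have h0 := mul_nonneg (hind0 m (N ω)) (hG0 (Tt i ω))
    refine abs_le.2 ⟨by linarith, ?_⟩
    nlinarith [hind0 m (N ω), hind1 m (N ω), hG0 (Tt i ω), hGK (Tt i ω)]
  -- convergence of each term of the series
  have htermlim : ∀ m : ℕ, Tendsto (fun n : ℕ => (n : ℝ) * ∫ ω, ind m (N ω) *
      (1 - Real.exp (-∑ i ∈ Finset.range m, f (Tt i ω, σ (a n)⁻¹ (Xx i ω)))) ∂P)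
      atTop (𝓝 (∫ ω, ind m (N ω) * ∑ i ∈ Finset.range m, G (Tt i ω) ∂P)) := by
    intro m
    have hfuneq : ∀ n : ℕ, (n : ℝ) * ∫ ω, ind m (N ω) *
        (1 - Real.exp (-∑ i ∈ Finset.range m, f (Tt i ω, σ (a n)⁻¹ (Xx i ω)))) ∂P
        = ∑ i ∈ Finset.range m,
            ((n : ℝ) * ∫ ω, ind m (N ω) * g (Tt i ω, σ (a n)⁻¹ (Xx i ω)) ∂P
              - (n : ℝ) * ∫ ω, ind m (N ω) *
                ((1 - ∏ j ∈ Finset.range i, Real.exp (-f (Tt j ω, σ (a n)⁻¹ (Xx j ω)))) *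
                  g (Tt i ω, σ (a n)⁻¹ (Xx i ω))) ∂P) := by
      intro n
      have hpt : ∀ ω : Ω, ind m (N ω) *
          (1 - Real.exp (-∑ i ∈ Finset.range m, f (Tt i ω, σ (a n)⁻¹ (Xx i ω))))
          = ∑ i ∈ Finset.range m,
              (ind m (N ω) * g (Tt i ω, σ (a n)⁻¹ (Xx i ω))
                - ind m (N ω) *
                  ((1 - ∏ j ∈ Finset.range i, Real.exp (-f (Tt j ω, σ (a n)⁻¹ (Xx j ω)))) *
                    g (Tt i ω, σ (a n)⁻¹ (Xx i ω)))) := by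
        intro ω
        rw [hexpprod n m ω,
          stmt13_telescope (fun i => Real.exp (-f (Tt i ω, σ (a n)⁻¹ (Xx i ω)))) m,
          Finset.mul_sum]
        refine Finset.sum_congr rfl fun i _ => ?_
        rw [hgid n i ω]
        ring
      have hI : ∫ ω, ind m (N ω) *
          (1 - Real.exp (-∑ i ∈ Finset.range m, f (Tt i ω, σ (a n)⁻¹ (Xx i ω)))) ∂P
          = ∑ i ∈ Finset.range m,
              ((∫ ω, ind m (N ω) * g (Tt i ω, σ (a n)⁻¹ (Xx i ω)) ∂P)
                - ∫ ω, ind m (N ω) *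
                  ((1 - ∏ j ∈ Finset.range i, Real.exp (-f (Tt j ω, σ (a n)⁻¹ (Xx j ω)))) *
                    g (Tt i ω, σ (a n)⁻¹ (Xx i ω))) ∂P) := by
        have hfs := integral_finset_sum (μ := P) (Finset.range m)
          (f := fun i ω => ind m (N ω) * g (Tt i ω, σ (a n)⁻¹ (Xx i ω))
            - ind m (N ω) *
              ((1 - ∏ j ∈ Finset.range i, Real.exp (-f (Tt j ω, σ (a n)⁻¹ (Xx j ω)))) *
                g (Tt i ω, σ (a n)⁻¹ (Xx i ω))))
          (fun i _ => (hint1 n m i).sub (hint2 n m i))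
        rw [integral_congr_ae (Filter.Eventually.of_forall hpt), hfs]
        exact Finset.sum_congr rfl fun i _ => integral_sub (hint1 n m i) (hint2 n m i)
      rw [hI, Finset.mul_sum]
      exact Finset.sum_congr rfl fun i _ => by ring
    have hlimconv := tendsto_finset_sum (Finset.range m)
      (fun i (_ : i ∈ Finset.range m) => (hMainLim m i).sub (hErr m i))
    have hLrw : ∫ ω, ind m (N ω) * ∑ i ∈ Finset.range m, G (Tt i ω) ∂P
        = ∑ i ∈ Finset.range m, (∫ ω, ind m (N ω) * G (Tt i ω) ∂P - 0) := by
      have hptG : ∀ ω : Ω, ind m (N ω) * ∑ i ∈ Finset.range m, G (Tt i ω)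
          = ∑ i ∈ Finset.range m, ind m (N ω) * G (Tt i ω) := fun ω => Finset.mul_sum _ _ _
      have hfs := integral_finset_sum (μ := P) (Finset.range m)
        (f := fun i ω => ind m (N ω) * G (Tt i ω)) (fun i _ => hintG m i)
      rw [integral_congr_ae (Filter.Eventually.of_forall hptG), hfs]
      exact Finset.sum_congr rfl fun i _ => (sub_zero _).symm
    rw [hLrw]
    exact Tendsto.congr (fun n => (hfuneq n).symm) hlimconv
  -- uniform bound for the terms of the series
  have htermbd : ∀ (n m : ℕ), ‖(n : ℝ) * ∫ ω, ind m (N ω) *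
      (1 - Real.exp (-∑ i ∈ Finset.range m, f (Tt i ω, σ (a n)⁻¹ (Xx i ω)))) ∂P‖
      ≤ K * ((m : ℝ) * (P {ω | N ω = m}).toReal) := by
    intro n m
    have hptnn : ∀ ω : Ω, 0 ≤ ind m (N ω) *
        (1 - Real.exp (-∑ i ∈ Finset.range m, f (Tt i ω, σ (a n)⁻¹ (Xx i ω)))) := by
      intro ω
      refine mul_nonneg (hind0 m (N ω)) ?_
      exact (hexp01 _ (Finset.sum_nonneg (fun i _ => hf0 _))).1
    have hnn : 0 ≤ ∫ ω, ind m (N ω) *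
        (1 - Real.exp (-∑ i ∈ Finset.range m, f (Tt i ω, σ (a n)⁻¹ (Xx i ω)))) ∂P :=
      integral_nonneg hptnn
    rw [Real.norm_eq_abs, abs_of_nonneg (mul_nonneg (Nat.cast_nonneg n) hnn)]
    have hpt : ∀ ω : Ω, ind m (N ω) *
        (1 - Real.exp (-∑ i ∈ Finset.range m, f (Tt i ω, σ (a n)⁻¹ (Xx i ω))))
        ≤ ∑ i ∈ Finset.range m, ind m (N ω) * g (Tt i ω, σ (a n)⁻¹ (Xx i ω)) := by
      intro ω
      rw [hexpprod n m ω]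
      have h2 : (1 - ∏ i ∈ Finset.range m, Real.exp (-f (Tt i ω, σ (a n)⁻¹ (Xx i ω))))
          ≤ ∑ i ∈ Finset.range m, (1 - Real.exp (-f (Tt i ω, σ (a n)⁻¹ (Xx i ω)))) :=
        stmt13_one_sub_prod_le _ (fun j => he0 n j ω) (fun j => he1 n j ω) m
      calc ind m (N ω) *
          (1 - ∏ i ∈ Finset.range m, Real.exp (-f (Tt i ω, σ (a n)⁻¹ (Xx i ω))))
          ≤ ind m (N ω) *
            ∑ i ∈ Finset.range m, (1 - Real.exp (-f (Tt i ω, σ (a n)⁻¹ (Xx i ω)))) :=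
            mul_le_mul_of_nonneg_left h2 (hind0 m (N ω))
        _ = ∑ i ∈ Finset.range m, ind m (N ω) * g (Tt i ω, σ (a n)⁻¹ (Xx i ω)) := by
            rw [Finset.mul_sum]
    have hIle : ∫ ω, ind m (N ω) *
        (1 - Real.exp (-∑ i ∈ Finset.range m, f (Tt i ω, σ (a n)⁻¹ (Xx i ω)))) ∂P
        ≤ ∑ i ∈ Finset.range m, ∫ ω, ind m (N ω) * g (Tt i ω, σ (a n)⁻¹ (Xx i ω)) ∂P := by
      calc ∫ ω, ind m (N ω) *
          (1 - Real.exp (-∑ i ∈ Finset.range m, f (Tt i ω, σ (a n)⁻¹ (Xx i ω)))) ∂P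
          ≤ ∫ ω, ∑ i ∈ Finset.range m, ind m (N ω) * g (Tt i ω, σ (a n)⁻¹ (Xx i ω)) ∂P := by
            refine integral_mono ?_ (integrable_finset_sum _ (fun i _ => hint1 n m i)) hpt
            refine stmt13_integrable_of_bdd
              ((hindmeas m).mul (hFmmeas n m)).aestronglyMeasurable 1 fun ω => ?_
            have h := hexp01 (∑ i ∈ Finset.range m, f (Tt i ω, σ (a n)⁻¹ (Xx i ω)))
              (Finset.sum_nonneg (fun i _ => hf0 _))
            refine abs_le.2 ⟨by linarith [hptnn ω], ?_⟩
            nlinarith [hind0 m (N ω), hind1 m (N ω), h.1, h.2]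
        _ = ∑ i ∈ Finset.range m, ∫ ω, ind m (N ω) * g (Tt i ω, σ (a n)⁻¹ (Xx i ω)) ∂P :=
            integral_finset_sum _ (fun i _ => hint1 n m i)
    have hterm_le : ∀ i : ℕ, (n : ℝ) * ∫ ω, ind m (N ω) * g (Tt i ω, σ (a n)⁻¹ (Xx i ω)) ∂P
        ≤ K * (P {ω | N ω = m}).toReal := by
      intro i
      have hile : ∫ ω, ind m (N ω) * ((n : ℝ) * Gn n (Tt i ω)) ∂P
          ≤ ∫ ω, ind m (N ω) * K ∂P := by
        refine integral_mono ?_ ?_ fun ω => ?_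
        · refine stmt13_integrable_of_bdd ((hindmeas m).mul
            (measurable_const.mul ((hGncont n).measurable.comp (hTmeas i)))).aestronglyMeasurable
            (K + 1) fun ω => ?_
          have h1 : 0 ≤ (n : ℝ) * Gn n (Tt i ω) := mul_nonneg (Nat.cast_nonneg n) (hGn0 n _)
          have h0 := mul_nonneg (hind0 m (N ω)) h1
          refine abs_le.2 ⟨by linarith, ?_⟩
          nlinarith [hind0 m (N ω), hind1 m (N ω), hnGnK n (Tt i ω)]
        · refine stmt13_integrable_of_bdd
            ((hindmeas m).mul measurable_const).aestronglyMeasurable (K + 1) fun ω => ?_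
          have h0 := mul_nonneg (hind0 m (N ω)) hK0
          refine abs_le.2 ⟨by linarith, ?_⟩
          nlinarith [hind0 m (N ω), hind1 m (N ω)]
        · exact mul_le_mul_of_nonneg_left
            (le_trans (hnGnK n (Tt i ω)) (le_refl K)) (hind0 m (N ω))
      calc (n : ℝ) * ∫ ω, ind m (N ω) * g (Tt i ω, σ (a n)⁻¹ (Xx i ω)) ∂P
          = ∫ ω, ind m (N ω) * ((n : ℝ) * Gn n (Tt i ω)) ∂P := hswap n m i
        _ ≤ ∫ ω, ind m (N ω) * K ∂P := hile
        _ = K * (P {ω | N ω = m}).toReal := by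
            rw [integral_mul_const, hindint m]
            ring
    calc (n : ℝ) * ∫ ω, ind m (N ω) *
        (1 - Real.exp (-∑ i ∈ Finset.range m, f (Tt i ω, σ (a n)⁻¹ (Xx i ω)))) ∂P
        ≤ (n : ℝ) * ∑ i ∈ Finset.range m,
            ∫ ω, ind m (N ω) * g (Tt i ω, σ (a n)⁻¹ (Xx i ω)) ∂P :=
          mul_le_mul_of_nonneg_left hIle (Nat.cast_nonneg n)
      _ = ∑ i ∈ Finset.range m,
            (n : ℝ) * ∫ ω, ind m (N ω) * g (Tt i ω, σ (a n)⁻¹ (Xx i ω)) ∂P :=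
          Finset.mul_sum _ _ _
      _ ≤ ∑ _i ∈ Finset.range m, K * (P {ω | N ω = m}).toReal :=
          Finset.sum_le_sum fun i _ => hterm_le i
      _ = K * ((m : ℝ) * (P {ω | N ω = m}).toReal) := by
          rw [Finset.sum_const, Finset.card_range, nsmul_eq_mul]
          ring
  -- summability of the dominating series
  have hNsum : HasSum (fun m : ℕ => (m : ℝ) * (P {ω | N ω = m}).toReal)
      (∫ ω, (N ω : ℝ) ∂P) := by
    have h := hpart _ hNint
    have heq : ∀ m : ℕ, ∫ ω in {ω | N ω = m}, (N ω : ℝ) ∂P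
        = (m : ℝ) * (P {ω | N ω = m}).toReal := by
      intro m
      rw [setIntegral_congr_fun (hsetmeas m) (g := fun _ => (m : ℝ))
        (fun ω hω => by
          simp only [Set.mem_setOf_eq] at hω
          show ((N ω : ℝ)) = (m : ℝ)
          exact_mod_cast hω),
        setIntegral_const]
      rw [smul_eq_mul, Measure.real]
      ring
    exact (funext heq : _) ▸ h
  have hbsum : Summable (fun m : ℕ => K * ((m : ℝ) * (P {ω | N ω = m}).toReal)) :=
    hNsum.summable.mul_left K
  -- final assembly
  have hfinal := tendsto_tsum_of_dominated_convergence
    (f := fun (n : ℕ) (m : ℕ) => (n : ℝ) * ∫ ω, ind m (N ω) *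
      (1 - Real.exp (-∑ i ∈ Finset.range m, f (Tt i ω, σ (a n)⁻¹ (Xx i ω)))) ∂P)
    hbsum htermlim (Filter.Eventually.of_forall htermbd)
  have hR : (∫ ω, ∑ i ∈ Finset.range (N ω), ∫ x, (1 - Real.exp (-f (Tt i ω, x))) ∂μ ∂P)
      = ∑' m : ℕ, ∫ ω, ind m (N ω) * ∑ i ∈ Finset.range m, G (Tt i ω) ∂P :=
    hLdecomp.tsum_eq.symm
  rw [hR]
  exact hfinal.congr (fun n => ((hdecomp n).mul_left ((n : ℝ))).tsum_eq)
end

section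
/- Let k ≥ 0 be an integer, let N be an ℕ-valued random variable with E[N^{k+1}] < ∞, let q ∈ [0,∞), and let (p_n)_{n ≥ 1} ⊆ [0,1] with n·p_n → q as n → ∞. Then n^{k+1}·Σ_{j=0}^{∞} P(N = j)·(Σ_{i=k+1}^{j} (j choose i)·p_n^i·(1−p_n)^{j−i}) → (q^{k+1}/(k+1)!)·E[N·(N−1)⋯(N−k)] as n → ∞. Equivalently, if S_n is binomial with parameters (N,p_n) conditionally on N, then n^{k+1}·P(S_n ≥ k+1) → (q^{k+1}/(k+1)!)·E[N^{[k+1]}], where N^{[k+1]} = N·(N−1)⋯(N−k) is the (k+1)-th descending factorial of N. -/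
open MeasureTheory Filter Topology

private lemma sum_meas_summable {μ : Measure ℕ} {f : ℕ → ℝ} (hf : Integrable f μ) :
    Summable fun j => (μ {j}).toReal * ‖f j‖ := by
  have h2 : (∫⁻ a, ‖f a‖₊ ∂μ) < ⊤ := hf.2
  rw [lintegral_countable'] at h2
  have hs := ENNReal.summable_toReal h2.ne
  refine hs.congr fun j => ?_
  rw [ENNReal.toReal_mul]
  simp [mul_comm, coe_nnnorm]

private lemma prod_range_cast (kk j : ℕ) :
    ∏ m ∈ Finset.range kk, ((j : ℝ) - (m : ℝ)) = (j.descFactorial kk : ℝ) := by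
  rcases lt_or_ge j kk with h | h
  · rw [Nat.descFactorial_eq_zero_iff_lt.mpr h, Nat.cast_zero]
    refine Finset.prod_eq_zero (Finset.mem_range.mpr h) ?_
    simp
  · rw [Nat.descFactorial_eq_prod_range, Nat.cast_prod]
    refine Finset.prod_congr rfl fun m hm => ?_
    rw [Nat.cast_sub (le_trans (Finset.mem_range.mp hm).le h)]

private lemma binom_tail_le (j m : ℕ) {x : ℝ} (hx0 : 0 ≤ x) (hx1 : x ≤ 1) :
    ∑ i ∈ Finset.Icc m j, (j.choose i : ℝ) * x ^ i * (1 - x) ^ (j - i)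
      ≤ (j.choose m : ℝ) * x ^ m := by
  have hx1' : 0 ≤ 1 - x := by linarith
  rcases lt_or_ge j m with h | h
  · rw [Finset.Icc_eq_empty (by omega)]
    simp only [Finset.sum_empty]
    positivity
  · rw [← Finset.Ico_add_one_right_eq_Icc, Finset.sum_Ico_eq_sum_range,
      show j + 1 - m = (j - m) + 1 by omega]
    have key : ∀ l ∈ Finset.range ((j - m) + 1),
        (j.choose (m + l) : ℝ) * x ^ (m + l) * (1 - x) ^ (j - (m + l))
          ≤ (j.choose m : ℝ) * x ^ m *
            (x ^ l * (1 - x) ^ ((j - m) - l) * ((j - m).choose l : ℝ)) := by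
      intro l hl
      have hlm : m + l ≤ j := by
        simp only [Finset.mem_range] at hl; omega
      have hchoose : (j.choose (m + l) : ℝ) ≤ (j.choose m : ℝ) * ((j - m).choose l : ℝ) := by
        have h1 := Nat.choose_mul (n := j) (Nat.le_add_right m l)
        rw [Nat.add_sub_cancel_left] at h1
        have h2 : 1 ≤ (m + l).choose m := Nat.choose_pos (Nat.le_add_right m l)
        calc (j.choose (m + l) : ℝ)
            ≤ ((j.choose (m + l) * (m + l).choose m : ℕ) : ℝ) := by
              exact_mod_cast Nat.le_mul_of_pos_right _ h2
          _ = ((j.choose m * (j - m).choose l : ℕ) : ℝ) := by rw [h1]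
          _ = _ := by push_cast; ring
      have hjml : j - (m + l) = (j - m) - l := by omega
      rw [hjml, pow_add]
      calc (j.choose (m + l) : ℝ) * (x ^ m * x ^ l) * (1 - x) ^ ((j - m) - l)
          ≤ ((j.choose m : ℝ) * ((j - m).choose l : ℝ)) * (x ^ m * x ^ l)
              * (1 - x) ^ ((j - m) - l) := by
            apply mul_le_mul_of_nonneg_right
              (mul_le_mul_of_nonneg_right hchoose (by positivity)) (by positivity)
        _ = _ := by ring
    have hsum1 : ∑ l ∈ Finset.range ((j - m) + 1),
        x ^ l * (1 - x) ^ ((j - m) - l) * ((j - m).choose l : ℝ) = 1 := by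
      rw [← add_pow]
      norm_num
    calc ∑ l ∈ Finset.range ((j - m) + 1),
          (j.choose (m + l) : ℝ) * x ^ (m + l) * (1 - x) ^ (j - (m + l))
        ≤ ∑ l ∈ Finset.range ((j - m) + 1), (j.choose m : ℝ) * x ^ m *
            (x ^ l * (1 - x) ^ ((j - m) - l) * ((j - m).choose l : ℝ)) :=
          Finset.sum_le_sum key
      _ = (j.choose m : ℝ) * x ^ m * ∑ l ∈ Finset.range ((j - m) + 1),
            x ^ l * (1 - x) ^ ((j - m) - l) * ((j - m).choose l : ℝ) := by
          rw [Finset.mul_sum]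
      _ = (j.choose m : ℝ) * x ^ m := by rw [hsum1, mul_one]

/-- Mixed binomial tail asymptotics: if `n·p_n → q` and `S_n` is binomial with
parameters `(N, p_n)` conditionally on `N`, then
`n^{k+1}·P(S_n ≥ k+1) → (q^{k+1}/(k+1)!)·E[N(N−1)⋯(N−k)]`
(established in the proofs of Theorem 3.2 and Proposition 4.4 of the paper). -/
theorem stmt_17
    {Ω : Type*} [MeasurableSpace Ω] (P : Measure Ω) [IsProbabilityMeasure P]
    (k : ℕ) (N : Ω → ℕ) (hNmeas : Measurable N)
    (hNmom : Integrable (fun ω => (N ω : ℝ) ^ (k + 1)) P)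
    (q : ℝ) (hq : 0 ≤ q) (p : ℕ → ℝ) (hp0 : ∀ n, 0 ≤ p n) (hp1 : ∀ n, p n ≤ 1)
    (hconv : Tendsto (fun n : ℕ => (n : ℝ) * p n) atTop (𝓝 q)) :
    Tendsto (fun n : ℕ => (n : ℝ) ^ (k + 1) *
        ∑' j : ℕ, (P {ω | N ω = j}).toReal *
          ∑ i ∈ Finset.Icc (k + 1) j,
            (j.choose i : ℝ) * p n ^ i * (1 - p n) ^ (j - i))
      atTop
      (𝓝 (q ^ (k + 1) / (Nat.factorial (k + 1) : ℝ) *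
        ∫ ω, ∏ m ∈ Finset.range (k + 1), ((N ω : ℝ) - (m : ℝ)) ∂P)) := by
  classical
  set μ : Measure ℕ := P.map N with hμdef
  have hmap : ∀ j : ℕ, P {ω | N ω = j} = μ {j} := by
    intro j
    rw [hμdef, Measure.map_apply hNmeas (measurableSet_singleton j)]
    rfl
  have hint1 : Integrable (fun j : ℕ => (j : ℝ) ^ (k + 1)) μ := by
    rw [hμdef]
    exact (integrable_map_measure measurable_from_nat.aestronglyMeasurable
      hNmeas.aemeasurable).mpr hNmom
  set g : ℕ → ℝ := fun j => (j.descFactorial (k + 1) : ℝ) with hgdef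
  have hgN : Integrable (fun ω => g (N ω)) P := by
    refine hNmom.mono' (Measurable.aestronglyMeasurable
      (show Measurable fun ω => g (N ω) from (measurable_from_nat (f := g)).comp hNmeas))
      (Filter.Eventually.of_forall fun ω => ?_)
    rw [hgdef]
    simp only [Real.norm_natCast]
    calc ((N ω).descFactorial (k + 1) : ℝ)
        ≤ (((N ω) ^ (k + 1) : ℕ) : ℝ) := by exact_mod_cast Nat.descFactorial_le_pow _ _
      _ = (N ω : ℝ) ^ (k + 1) := by push_cast; ring
  have hgμ : Integrable g μ := by
    rw [hμdef]
    exact (integrable_map_measure measurable_from_nat.aestronglyMeasurable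
      hNmeas.aemeasurable).mpr hgN
  have hI : ∫ ω, ∏ m ∈ Finset.range (k + 1), ((N ω : ℝ) - (m : ℝ)) ∂P
      = ∑' j : ℕ, (μ {j}).toReal * g j := by
    have h1 : ∫ ω, ∏ m ∈ Finset.range (k + 1), ((N ω : ℝ) - (m : ℝ)) ∂P
        = ∫ ω, g (N ω) ∂P := by
      refine integral_congr_ae (Filter.Eventually.of_forall fun ω => ?_)
      exact prod_range_cast (k + 1) (N ω)
    rw [h1, hμdef, ← integral_map hNmeas.aemeasurable
      measurable_from_nat.aestronglyMeasurable]
    rw [← hμdef, integral_countable' hgμ]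
    simp [smul_eq_mul, Measure.real]
  obtain ⟨M, hM⟩ := hconv.bddAbove_range
  have hMn : ∀ n : ℕ, (n : ℝ) * p n ≤ M := fun n => hM ⟨n, rfl⟩
  have hM0 : 0 ≤ M := le_trans (by simp) (hMn 0)
  have hnp0 : ∀ n : ℕ, 0 ≤ (n : ℝ) * p n := fun n =>
    mul_nonneg (Nat.cast_nonneg n) (hp0 n)
  have hp_lim : Tendsto p atTop (𝓝 0) := by
    have h1 : Tendsto (fun n : ℕ => ((n : ℝ) * p n) * (n : ℝ)⁻¹) atTop (𝓝 (q * 0)) :=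
      hconv.mul (tendsto_inv_atTop_zero.comp tendsto_natCast_atTop_atTop)
    rw [mul_zero] at h1
    refine h1.congr' ?_
    filter_upwards [eventually_ge_atTop 1] with n hn
    have hne : (n : ℝ) ≠ 0 := by
      have : (1 : ℝ) ≤ (n : ℝ) := by exact_mod_cast hn
      linarith
    field_simp
  have hT : ∀ j : ℕ, Tendsto (fun n : ℕ => (n : ℝ) ^ (k + 1) *
      ∑ i ∈ Finset.Icc (k + 1) j, (j.choose i : ℝ) * p n ^ i * (1 - p n) ^ (j - i))
      atTop (𝓝 (q ^ (k + 1) * (j.choose (k + 1) : ℝ))) := by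
    intro j
    have hterm : ∀ i ∈ Finset.Icc (k + 1) j, Tendsto (fun n : ℕ =>
        (j.choose i : ℝ) * ((((n : ℝ) * p n) ^ (k + 1) * p n ^ (i - (k + 1)))
          * (1 - p n) ^ (j - i)))
        atTop (𝓝 ((j.choose i : ℝ) * ((q ^ (k + 1) * (0 : ℝ) ^ (i - (k + 1)))
          * (1 - 0) ^ (j - i)))) := by
      intro i hi
      exact tendsto_const_nhds.mul
        ((((hconv.pow _).mul (hp_lim.pow _))).mul
          ((tendsto_const_nhds.sub hp_lim).pow _))
    have hsum := tendsto_finset_sum (Finset.Icc (k + 1) j) hterm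
    have hval : ∑ i ∈ Finset.Icc (k + 1) j,
        (j.choose i : ℝ) * ((q ^ (k + 1) * (0 : ℝ) ^ (i - (k + 1))) * (1 - 0) ^ (j - i))
        = q ^ (k + 1) * (j.choose (k + 1) : ℝ) := by
      rw [Finset.sum_eq_single (k + 1)]
      · simp [mul_comm]
      · intro i hi hne
        have h1 : k + 1 ≤ i := (Finset.mem_Icc.mp hi).1
        have h2 : 0 < i - (k + 1) := by omega
        rw [zero_pow h2.ne']
        ring
      · intro h
        have : j < k + 1 := by
          by_contra hc
          exact h (Finset.mem_Icc.mpr ⟨le_refl _, by omega⟩)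
        rw [Nat.choose_eq_zero_of_lt this]
        simp
    rw [hval] at hsum
    refine hsum.congr fun n => ?_
    rw [Finset.mul_sum]
    refine Finset.sum_congr rfl fun i hi => ?_
    have hik : k + 1 ≤ i := (Finset.mem_Icc.mp hi).1
    have hpi : p n ^ i = p n ^ (k + 1) * p n ^ (i - (k + 1)) := by
      rw [← pow_add, Nat.add_sub_cancel' hik]
    rw [mul_pow, hpi]
    ring
  set b : ℕ → ℝ := fun j => (μ {j}).toReal * (M ^ (k + 1) * (j : ℝ) ^ (k + 1)) with hbdef
  have hb : Summable b := by
    have hs := sum_meas_summable (μ := μ)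
      (f := fun j => M ^ (k + 1) * (j : ℝ) ^ (k + 1)) (hint1.const_mul _)
    refine hs.congr fun j => ?_
    rw [Real.norm_of_nonneg (by positivity)]
  have hdom : ∀ n : ℕ, ∀ j : ℕ,
      ‖(μ {j}).toReal * ((n : ℝ) ^ (k + 1) *
        ∑ i ∈ Finset.Icc (k + 1) j, (j.choose i : ℝ) * p n ^ i * (1 - p n) ^ (j - i))‖
      ≤ b j := by
    intro n j
    have h1x : 0 ≤ 1 - p n := by linarith [hp1 n]
    have hTn : 0 ≤ ∑ i ∈ Finset.Icc (k + 1) j,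
        (j.choose i : ℝ) * p n ^ i * (1 - p n) ^ (j - i) := by
      refine Finset.sum_nonneg fun i hi => ?_
      have := hp0 n
      positivity
    rw [Real.norm_of_nonneg (by positivity)]
    refine mul_le_mul_of_nonneg_left ?_ ENNReal.toReal_nonneg
    calc (n : ℝ) ^ (k + 1) *
          ∑ i ∈ Finset.Icc (k + 1) j, (j.choose i : ℝ) * p n ^ i * (1 - p n) ^ (j - i)
        ≤ (n : ℝ) ^ (k + 1) * ((j.choose (k + 1) : ℝ) * p n ^ (k + 1)) :=
          mul_le_mul_of_nonneg_left (binom_tail_le j (k + 1) (hp0 n) (hp1 n))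
            (by positivity)
      _ = ((n : ℝ) * p n) ^ (k + 1) * (j.choose (k + 1) : ℝ) := by
          rw [mul_pow]; ring
      _ ≤ M ^ (k + 1) * (j : ℝ) ^ (k + 1) := by
          refine mul_le_mul (pow_le_pow_left₀ (hnp0 n) (hMn n) _) ?_
            (by positivity) (by positivity)
          exact_mod_cast Nat.choose_le_pow j (k + 1)
  have hmain := tendsto_tsum_of_dominated_convergence (f := fun (n : ℕ) (j : ℕ) =>
      (μ {j}).toReal * ((n : ℝ) ^ (k + 1) *
        ∑ i ∈ Finset.Icc (k + 1) j, (j.choose i : ℝ) * p n ^ i * (1 - p n) ^ (j - i)))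
      (g := fun j => (μ {j}).toReal * (q ^ (k + 1) * (j.choose (k + 1) : ℝ)))
      hb (fun j => tendsto_const_nhds.mul (hT j))
      (Filter.Eventually.of_forall hdom)
  have hval2 : (∑' j : ℕ, (μ {j}).toReal * (q ^ (k + 1) * (j.choose (k + 1) : ℝ)))
      = q ^ (k + 1) / (Nat.factorial (k + 1) : ℝ)
        * ∫ ω, ∏ m ∈ Finset.range (k + 1), ((N ω : ℝ) - (m : ℝ)) ∂P := by
    rw [hI, ← tsum_mul_left]
    refine tsum_congr fun j => ?_
    have hfac : (Nat.factorial (k + 1) : ℝ) ≠ 0 := by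
      exact_mod_cast (Nat.factorial_pos (k + 1)).ne'
    have hg : g j = (Nat.factorial (k + 1) : ℝ) * (j.choose (k + 1) : ℝ) := by
      rw [hgdef]
      simp only
      rw [Nat.descFactorial_eq_factorial_mul_choose]
      push_cast; ring
    rw [hg]
    field_simp
  rw [← hval2]
  refine hmain.congr fun n => ?_
  rw [← tsum_mul_left]
  refine tsum_congr fun j => ?_
  rw [hmap]
  ring
end
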